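/- Under the same setup as the decoupled prover-verifier game, if (v*, τ*, τ'*) is a verifier-leading Stackelberg equilibrium in which R_V(v*) = 0 (the verifier achieves the maximal utility 0), then: (i) completeness holds for (v*, τ*); (ii) soundness holds for v*: for all x, z, c(x,z)=0 implies v*(x,z)=0; and (iii) τ* is faithful: faith(x, τ*(x)) = 1 for all x. -/
import Mathlib


/-- necessity direction of Theorem 1: if `(v*, τ*, τ'*)` is a
verifier-leading Stackelberg equilibrium in which the verifier achieves the maximal
utility `R_V(v*) = 0`, then completeness, soundness, and faithfulness hold. -/
theorem equilibrium_implies_complete_sound_faithful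
    {X Z : Type*} [Fintype X] [Nonempty X]
    (c faith : X → Z → ℝ) (vs : X → Z → ℝ) (τs τs' : X → Z)
    (l r : ℝ → ℝ → ℝ)
    (hc : ∀ x z, c x z = 0 ∨ c x z = 1)
    (hfaith_val : ∀ x z, faith x z = 0 ∨ faith x z = 1)
    (hv : ∀ x z, vs x z ∈ Set.Icc (0:ℝ) 1)
    (hl_nonneg : ∀ a b, 0 ≤ l a b)
    (hl_zero : ∀ a b, l a b = 0 ↔ a = b)
    (hr_sep : ∀ v₁ v₂ : ℝ, v₁ ∈ Set.Icc (0:ℝ) 1 → v₂ ∈ Set.Icc (0:ℝ) 1 →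
      r v₁ 1 > r v₂ 0)
    (hr_mono : ∀ v₁ v₂ : ℝ, v₁ ∈ Set.Icc (0:ℝ) 1 → v₂ ∈ Set.Icc (0:ℝ) 1 →
      v₁ > v₂ → r v₁ 1 > r v₂ 1)
    (hex_incorrect : ∀ x, ∃ z : Z, c x z = 0)
    (hex_faithful : ∀ x, ∃ z : Z, faith x z = 1)
    -- τ* and τ'* are pointwise best responses to v*
    (hbrτ : ∀ x, ∀ z : Z,
      r (vs x z) (faith x z) ≤ r (vs x (τs x)) (faith x (τs x)))
    (hbrτ' : ∀ x, ∀ z : Z,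
      r (vs x z) (1 - c x z) ≤ r (vs x (τs' x)) (1 - c x (τs' x)))
    -- the verifier achieves the maximal utility 0
    (hRV_zero : -(1/2) * (1 / (Fintype.card X : ℝ)) *
      ∑ x : X, (l (vs x (τs x)) (c x (τs x)) +
        l (vs x (τs' x)) (c x (τs' x))) = 0) :
    -- (i) completeness for (v*, τ*)
    (∀ x, c x (τs x) = 1 → vs x (τs x) = 1) ∧
    -- (ii) soundness for v*
    (∀ x, ∀ z : Z, c x z = 0 → vs x z = 0) ∧
    -- (iii) τ* is faithful
    (∀ x, faith x (τs x) = 1) := by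

  have hcard : (0:ℝ) < (Fintype.card X : ℝ) := by
    exact_mod_cast Fintype.card_pos
  have hsum : ∑ x : X, (l (vs x (τs x)) (c x (τs x)) +
      l (vs x (τs' x)) (c x (τs' x))) = 0 := by
    have h := hRV_zero
    have hne : -(1/2) * (1 / (Fintype.card X : ℝ)) ≠ 0 := by
      have : (1 / (Fintype.card X : ℝ)) ≠ 0 := by positivity
      simp [this]
    exact (mul_eq_zero.mp h).resolve_left hne
  have hterm : ∀ x : X, l (vs x (τs x)) (c x (τs x)) +
      l (vs x (τs' x)) (c x (τs' x)) = 0 := by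
    intro x
    have := (Finset.sum_eq_zero_iff_of_nonneg (fun x _ => by
      have := hl_nonneg (vs x (τs x)) (c x (τs x))
      have := hl_nonneg (vs x (τs' x)) (c x (τs' x))
      linarith)).mp hsum x (Finset.mem_univ x)
    exact this
  have hτ : ∀ x : X, vs x (τs x) = c x (τs x) := by
    intro x
    have h1 := hl_nonneg (vs x (τs x)) (c x (τs x))
    have h2 := hl_nonneg (vs x (τs' x)) (c x (τs' x))
    have := hterm x
    exact (hl_zero _ _).mp (by linarith)
  have hτ' : ∀ x : X, vs x (τs' x) = c x (τs' x) := by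
    intro x
    have h1 := hl_nonneg (vs x (τs x)) (c x (τs x))
    have h2 := hl_nonneg (vs x (τs' x)) (c x (τs' x))
    have := hterm x
    exact (hl_zero _ _).mp (by linarith)
  refine ⟨fun x h => by rw [hτ x, h], ?_, ?_⟩
  · intro x z hz
    have hbr := hbrτ' x z
    rw [hz] at hbr
    simp only [sub_zero] at hbr
    have hcτ' : c x (τs' x) = 0 := by
      rcases hc x (τs' x) with h0 | h1
      · exact h0
      · exfalso
        rw [h1] at hbr
        simp only [sub_self] at hbr
        exact absurd hbr (not_le.mpr (hr_sep _ _ (hv x z) (hv x (τs' x))))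
    rw [hcτ'] at hbr
    simp only [sub_zero] at hbr
    have hvτ' : vs x (τs' x) = 0 := by rw [hτ' x, hcτ']
    rw [hvτ'] at hbr
    by_contra hne
    have hpos : vs x z > 0 := lt_of_le_of_ne (hv x z).1 (Ne.symm hne)
    exact absurd hbr (not_le.mpr (hr_mono _ _ (hv x z) ⟨le_refl 0, zero_le_one⟩ hpos))
  · intro x
    obtain ⟨z, hz⟩ := hex_faithful x
    have hbr := hbrτ x z
    rw [hz] at hbr
    rcases hfaith_val x (τs x) with h0 | h1
    · exfalso
      rw [h0] at hbr
      exact absurd hbr (not_le.mpr (hr_sep _ _ (hv x z) (hv x (τs x))))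
    · exact h1
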